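/- arXiv:1804.08265 — 2 statements merged into one kernel-verified Lean document; each statement's English description precedes it below -/
import Mathlib

section
/- Let f: ℝ^N → ℝ be twice continuously differentiable such that for all vectors u, x with ‖u‖₀ ≤ k and ‖x‖₀ ≤ k, α_k‖x‖₂² ≤ xᵀ∇²f(u)x ≤ β_k‖x‖₂². Then for any vectors x, y, z with supports T₁, T₂, T₃ respectively, T = T₁∪T₂∪T₃ with |T| ≤ k, and any ρ > 0, one has ⟨x, y - z - ρ(∇f(y) - ∇f(z))⟩ ≤ (|1 - ρ(β_k+α_k)/2| + ρ(β_k-α_k)/2)·‖x‖₂·‖y - z‖₂. -/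
open scoped RealInnerProductSpace

section AuxBilin

variable {E : Type*} [NormedAddCommGroup E] [InnerProductSpace ℝ E]

/-- A symmetric bilinear form whose quadratic form is bounded by `r * ‖v‖²` on a class of
vectors closed under addition, subtraction and scalar multiplication is bounded by
`r * ‖v‖ * ‖w‖` on that class. -/
lemma aux_bilin_bound (A : E →L[ℝ] E) (m r : ℝ) (hr : 0 ≤ r) (P : E → Prop)
    (hPadd : ∀ v w, P v → P w → P (v + w)) (hPsub : ∀ v w, P v → P w → P (v - w))
    (hPsmul : ∀ (c : ℝ) v, P v → P (c • v))
    (hsymm : ∀ v w, P v → P w → ⟪v, A w⟫ = ⟪w, A v⟫)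
    (hquad : ∀ v, P v → |⟪v, A v⟫ - m * ‖v‖ ^ 2| ≤ r * ‖v‖ ^ 2)
    (v w : E) (hv : P v) (hw : P w) :
    |⟪v, A w⟫ - m * ⟪v, w⟫| ≤ r * ‖v‖ * ‖w‖ := by
  set c : E → E → ℝ := fun v w => ⟪v, A w⟫ - m * ⟪v, w⟫ with hc
  have hcsmul₁ : ∀ (s : ℝ) v w, c (s • v) w = s * c v w := by
    intro s v w
    simp only [hc, real_inner_smul_left]
    ring
  have hcsmul₂ : ∀ (s : ℝ) v w, c v (s • w) = s * c v w := by
    intro s v w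
    simp only [hc, map_smul, real_inner_smul_right]
    ring
  have hquad' : ∀ v, P v → |c v v| ≤ r * ‖v‖ ^ 2 := by
    intro v hv
    have := hquad v hv
    simpa [hc, real_inner_self_eq_norm_sq] using this
  clear_value c
  -- Step 1 : polarization bound
  have step1 : ∀ v w, P v → P w → |c v w| ≤ r / 2 * (‖v‖ ^ 2 + ‖w‖ ^ 2) := by
    intro v w hv hw
    have hpol : c v w = (c (v + w) (v + w) - c (v - w) (v - w)) / 4 := by
      have hWV : ⟪w, A v⟫ = ⟪v, A w⟫ := (hsymm v w hv hw).symm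
      have hiWV : ⟪w, v⟫ = ⟪v, w⟫ := real_inner_comm v w
      simp only [hc, inner_add_left, inner_add_right, inner_sub_left, inner_sub_right,
        map_add, map_sub]
      rw [hWV, hiWV]
      ring
    have h1 := hquad' (v + w) (hPadd v w hv hw)
    have h2 := hquad' (v - w) (hPsub v w hv hw)
    have e1 : ‖v + w‖ ^ 2 = ‖v‖ ^ 2 + 2 * ⟪v, w⟫ + ‖w‖ ^ 2 := norm_add_sq_real v w
    have e2 : ‖v - w‖ ^ 2 = ‖v‖ ^ 2 - 2 * ⟪v, w⟫ + ‖w‖ ^ 2 := norm_sub_sq_real v w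
    rw [abs_le] at h1 h2
    rw [e1] at h1
    rw [e2] at h2
    rw [hpol, abs_le]
    refine ⟨by linarith [h1.1, h2.2], by linarith [h1.2, h2.1]⟩
  -- Step 2 : scaling
  by_cases hv0 : v = 0
  · simp [hv0]
  by_cases hw0 : w = 0
  · simp [hw0]
  have hnv : (0:ℝ) < ‖v‖ := norm_pos_iff.mpr hv0
  have hnw : (0:ℝ) < ‖w‖ := norm_pos_iff.mpr hw0
  have hu1 : ‖(‖v‖⁻¹ • v : E)‖ = 1 := by
    rw [norm_smul]
    simp [abs_of_pos (inv_pos.mpr hnv), inv_mul_cancel₀ hnv.ne']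
  have hu2 : ‖(‖w‖⁻¹ • w : E)‖ = 1 := by
    rw [norm_smul]
    simp [abs_of_pos (inv_pos.mpr hnw), inv_mul_cancel₀ hnw.ne']
  have key := step1 (‖v‖⁻¹ • v) (‖w‖⁻¹ • w) (hPsmul _ v hv) (hPsmul _ w hw)
  rw [hu1, hu2, hcsmul₁, hcsmul₂] at key
  have : |c v w| ≤ r * ‖v‖ * ‖w‖ := by
    rw [abs_mul, abs_mul, abs_of_pos (inv_pos.mpr hnv), abs_of_pos (inv_pos.mpr hnw)] at key
    have h := mul_le_mul_of_nonneg_left key (by positivity : (0:ℝ) ≤ ‖v‖ * ‖w‖)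
    calc |c v w| = ‖v‖ * ‖w‖ * (‖v‖⁻¹ * (‖w‖⁻¹ * |c v w|)) := by
          field_simp
      _ ≤ ‖v‖ * ‖w‖ * (r / 2 * (1 ^ 2 + 1 ^ 2)) := h
      _ = r * ‖v‖ * ‖w‖ := by ring
  simpa [hc] using this

end AuxBilin

/-- The inverse of `toDual` as a genuinely `ℝ`-linear continuous map. -/
noncomputable def dualInv (N : ℕ) :
    StrongDual ℝ (EuclideanSpace ℝ (Fin N)) →L[ℝ] EuclideanSpace ℝ (Fin N) where
  toFun := fun ℓ => (InnerProductSpace.toDual ℝ (EuclideanSpace ℝ (Fin N))).symm ℓ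
  map_add' := fun a b => by simp
  map_smul' := fun c a => by simp
  cont := (InnerProductSpace.toDual ℝ (EuclideanSpace ℝ (Fin N))).symm.continuous

lemma gradient_eq_dualInv_comp {N : ℕ} (f : EuclideanSpace ℝ (Fin N) → ℝ) :
    gradient f = (dualInv N) ∘ (fderiv ℝ f) := rfl

lemma inner_dualInv {N : ℕ} (ℓ : StrongDual ℝ (EuclideanSpace ℝ (Fin N)))
    (a : EuclideanSpace ℝ (Fin N)) : ⟪a, dualInv N ℓ⟫ = ℓ a := by
  rw [real_inner_comm]
  exact InnerProductSpace.toDual_symm_apply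

/-- Symmetry of the Hessian (as the derivative of the gradient) of a `C²` function. -/
lemma hess_symm {N : ℕ} (f : EuclideanSpace ℝ (Fin N) → ℝ) (hf : ContDiff ℝ 2 f)
    (u v w : EuclideanSpace ℝ (Fin N)) :
    ⟪v, fderiv ℝ (gradient f) u w⟫ = ⟪w, fderiv ℝ (gradient f) u v⟫ := by
  have hdf : ContDiff ℝ 1 (fderiv ℝ f) := hf.fderiv_right (by norm_num)
  have hfd : fderiv ℝ (gradient f) u =
      (dualInv N).comp (fderiv ℝ (fderiv ℝ f) u) := by
    rw [gradient_eq_dualInv_comp]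
    exact ((dualInv N).hasFDerivAt.comp u
      (hdf.differentiable one_ne_zero u).hasFDerivAt).fderiv
  have happ : ∀ a b : EuclideanSpace ℝ (Fin N),
      ⟪a, fderiv ℝ (gradient f) u b⟫ = fderiv ℝ (fderiv ℝ f) u b a := by
    intro a b
    rw [hfd]
    exact inner_dualInv _ a
  rw [happ, happ]
  exact second_derivative_symmetric
    (fun t => (hf.differentiable two_ne_zero t).hasFDerivAt)
    ((hdf.differentiable one_ne_zero u).hasFDerivAt) w v

set_option maxHeartbeats 1000000 in
/-- Lemma 1, part 1 (RPDH inner-product inequality). -/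
theorem stmt0 {N k : ℕ} (f : EuclideanSpace ℝ (Fin N) → ℝ)
    (hf : ContDiff ℝ 2 f) (αk βk : ℝ)
    (hRPDH : ∀ u x : EuclideanSpace ℝ (Fin N),
      (Function.support u).ncard ≤ k → (Function.support x).ncard ≤ k →
      αk * ‖x‖ ^ 2 ≤ ⟪x, fderiv ℝ (gradient f) u x⟫ ∧
        ⟪x, fderiv ℝ (gradient f) u x⟫ ≤ βk * ‖x‖ ^ 2)
    (x y z : EuclideanSpace ℝ (Fin N))
    (hT : (Function.support x ∪ Function.support y ∪ Function.support z).ncard ≤ k)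
    (ρ : ℝ) (hρ : 0 < ρ) :
    ⟪x, y - z - ρ • (gradient f y - gradient f z)⟫ ≤
      (|1 - ρ * ((βk + αk) / 2)| + ρ * ((βk - αk) / 2)) * ‖x‖ * ‖y - z‖ := by
  classical
  by_cases hx0 : x = 0
  · simp [hx0]
  set T : Set (Fin N) :=
    Function.support x ∪ Function.support y ∪ Function.support z with hTdef
  set P : EuclideanSpace ℝ (Fin N) → Prop := fun v => Function.support v ⊆ T with hPdef
  have hsupk : ∀ v : EuclideanSpace ℝ (Fin N), P v → (Function.support v).ncard ≤ k := by
    intro v hv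
    exact le_trans (Set.ncard_le_ncard hv (Set.toFinite T)) hT
  have hPx : P x := fun i hi => Or.inl (Or.inl hi)
  have hPy : P y := fun i hi => Or.inl (Or.inr hi)
  have hPz : P z := fun i hi => Or.inr hi
  have hPadd : ∀ v w : EuclideanSpace ℝ (Fin N), P v → P w → P (v + w) := by
    intro v w hv hw i hi
    by_contra h
    have hvi : v i = 0 := by
      by_contra h'; exact h (hv h')
    have hwi : w i = 0 := by
      by_contra h'; exact h (hw h')
    have : (v + w) i = 0 := by
      simp [PiLp.add_apply, hvi, hwi]
    exact hi this
  have hPsmul : ∀ (s : ℝ) (v : EuclideanSpace ℝ (Fin N)), P v → P (s • v) := by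
    intro s v hv i hi
    apply hv
    intro h
    have : (s • v) i = 0 := by simp [PiLp.smul_apply, h]
    exact hi this
  have hPneg : ∀ v : EuclideanSpace ℝ (Fin N), P v → P (-v) := by
    intro v hv
    have := hPsmul (-1) v hv
    simpa using this
  have hPsub : ∀ v w : EuclideanSpace ℝ (Fin N), P v → P w → P (v - w) := by
    intro v w hv hw
    have := hPadd v (-w) hv (hPneg w hw)
    simpa [sub_eq_add_neg] using this
  set d : EuclideanSpace ℝ (Fin N) := y - z with hd
  have hPd : P d := hPsub y z hPy hPz
  set u : ℝ → EuclideanSpace ℝ (Fin N) := fun τ => z + τ • d with hu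
  have hPu : ∀ τ : ℝ, P (u τ) := fun τ => hPadd z (τ • d) hPz (hPsmul τ d hPd)
  -- α ≤ β
  have hnx : (0:ℝ) < ‖x‖ := norm_pos_iff.mpr hx0
  have hαβ : αk ≤ βk := by
    obtain ⟨h1, h2⟩ := hRPDH x x (hsupk x hPx) (hsupk x hPx)
    nlinarith [pow_pos hnx 2]
  set m : ℝ := (βk + αk) / 2 with hm
  set r : ℝ := (βk - αk) / 2 with hrdef
  have hr : 0 ≤ r := by rw [hrdef]; linarith
  set H : EuclideanSpace ℝ (Fin N) → EuclideanSpace ℝ (Fin N) →L[ℝ] EuclideanSpace ℝ (Fin N) := fderiv ℝ (gradient f) with hH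
  -- key bilinear bound
  have hbound : ∀ τ : ℝ, |⟪x, H (u τ) d⟫ - m * ⟪x, d⟫| ≤ r * ‖x‖ * ‖d‖ := by
    intro τ
    refine aux_bilin_bound (H (u τ)) m r hr P hPadd hPsub hPsmul
      (fun v w _ _ => hess_symm f hf (u τ) v w) ?_ x d hPx hPd
    intro v hv
    obtain ⟨h1, h2⟩ := hRPDH (u τ) v (hsupk _ (hPu τ)) (hsupk v hv)
    rw [abs_le]
    constructor <;> [skip; skip] <;>
      simp only [hm, hrdef] <;> linarith
  -- pointwise bound on the integrand
  set C : ℝ := |1 - ρ * m| + ρ * r with hC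
  have hpt : ∀ τ : ℝ, ⟪x, d⟫ - ρ * ⟪x, H (u τ) d⟫ ≤ C * ‖x‖ * ‖d‖ := by
    intro τ
    have h1 : |⟪x, d⟫| ≤ ‖x‖ * ‖d‖ := abs_real_inner_le_norm x d
    have h2 := hbound τ
    have hsplit : ⟪x, d⟫ - ρ * ⟪x, H (u τ) d⟫ =
        (1 - ρ * m) * ⟪x, d⟫ - ρ * (⟪x, H (u τ) d⟫ - m * ⟪x, d⟫) := by ring
    rw [hsplit, hC]
    have e1 : (1 - ρ * m) * ⟪x, d⟫ ≤ |1 - ρ * m| * (‖x‖ * ‖d‖) := by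
      calc (1 - ρ * m) * ⟪x, d⟫ ≤ |(1 - ρ * m) * ⟪x, d⟫| := le_abs_self _
        _ = |1 - ρ * m| * |⟪x, d⟫| := abs_mul _ _
        _ ≤ |1 - ρ * m| * (‖x‖ * ‖d‖) :=
            mul_le_mul_of_nonneg_left h1 (abs_nonneg _)
    have e2 : -(ρ * (⟪x, H (u τ) d⟫ - m * ⟪x, d⟫)) ≤ ρ * (r * ‖x‖ * ‖d‖) := by
      have := neg_abs_le (⟪x, H (u τ) d⟫ - m * ⟪x, d⟫)
      nlinarith [abs_nonneg (⟪x, H (u τ) d⟫ - m * ⟪x, d⟫)]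
    nlinarith [e1, e2]
  -- smoothness facts
  have hdf : ContDiff ℝ 1 (fderiv ℝ f) := hf.fderiv_right (by norm_num)
  have hg1 : ContDiff ℝ 1 (gradient f) := by
    rw [gradient_eq_dualInv_comp]
    exact (dualInv N).contDiff.comp hdf
  have hHc : Continuous (fderiv ℝ (gradient f)) :=
    (hg1.fderiv_right (m := 0) (by norm_num)).continuous
  have hucont : Continuous u := by
    apply continuous_const.add
    exact continuous_id.smul continuous_const
  have hHcont : Continuous (fun τ : ℝ => H (u τ) d) := by
    have h1 : Continuous (fun τ : ℝ => H (u τ)) := hHc.comp hucont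
    exact (ContinuousLinearMap.apply ℝ (EuclideanSpace ℝ (Fin N)) d).continuous.comp h1
  have hInt : IntervalIntegrable (fun τ : ℝ => H (u τ) d) MeasureTheory.volume 0 1 :=
    hHcont.intervalIntegrable 0 1
  -- derivative of the path
  have hderiv : ∀ τ ∈ Set.uIcc (0:ℝ) 1,
      HasDerivAt (fun t : ℝ => gradient f (u t)) (H (u τ) d) τ := by
    intro τ _
    have hγ : HasDerivAt (fun t : ℝ => z + t • d) d τ := by
      simpa using ((hasDerivAt_id τ).smul_const d).const_add z
    exact ((hg1.differentiable one_ne_zero (u τ)).hasFDerivAt.comp_hasDerivAt τ hγ)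
  have hFTC : ∫ τ in (0:ℝ)..1, H (u τ) d = gradient f y - gradient f z := by
    have := intervalIntegral.integral_eq_sub_of_hasDerivAt hderiv hInt
    have h1 : u 1 = y := by
      rw [hu]; simp [hd]
    have h0 : u 0 = z := by
      rw [hu]; simp
    rw [this, h1, h0]
  -- swap inner product and integral
  have hswap : ⟪x, gradient f y - gradient f z⟫ = ∫ τ in (0:ℝ)..1, ⟪x, H (u τ) d⟫ := by
    rw [← hFTC]
    have := (innerSL ℝ x).intervalIntegral_comp_comm hInt
    simpa using this.symm
  -- put it together
  have hLHS : ⟪x, y - z - ρ • (gradient f y - gradient f z)⟫ =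
      ∫ τ in (0:ℝ)..1, (⟪x, d⟫ - ρ * ⟪x, H (u τ) d⟫) := by
    rw [inner_sub_right, real_inner_smul_right, hswap, ← hd]
    rw [intervalIntegral.integral_sub intervalIntegrable_const
        (((continuous_const.inner hHcont).intervalIntegrable 0 1).const_mul ρ)]
    rw [intervalIntegral.integral_const_mul, intervalIntegral.integral_const]
    simp
  have hcont2 : Continuous (fun τ : ℝ => ⟪x, d⟫ - ρ * ⟪x, H (u τ) d⟫) :=
    continuous_const.sub (continuous_const.mul (continuous_const.inner hHcont))
  have hmono : (∫ τ in (0:ℝ)..1, (⟪x, d⟫ - ρ * ⟪x, H (u τ) d⟫)) ≤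
      ∫ _ in (0:ℝ)..1, C * ‖x‖ * ‖d‖ := by
    apply intervalIntegral.integral_mono_on (by norm_num : (0:ℝ) ≤ 1)
      (hcont2.intervalIntegrable 0 1) intervalIntegrable_const
    intro t _
    exact hpt t
  rw [hLHS]
  calc (∫ τ in (0:ℝ)..1, (⟪x, d⟫ - ρ * ⟪x, H (u τ) d⟫)) ≤
      ∫ _ in (0:ℝ)..1, C * ‖x‖ * ‖d‖ := hmono
    _ = C * ‖x‖ * ‖d‖ := by simp
    _ = (|1 - ρ * ((βk + αk) / 2)| + ρ * ((βk - αk) / 2)) * ‖x‖ * ‖y - z‖ := by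
        rw [hC, hm, hrdef, hd]
end

section
/- Let X be a nonnegative irreducible L×L matrix. Then the spectral radius r of X satisfies min_i Σ_j X_{ij} ≤ r ≤ max_i Σ_j X_{ij}. -/
open Matrix

def MatIrreducible {L : ℕ} (X : Matrix (Fin L) (Fin L) ℝ) : Prop :=
  ∀ i j, ∃ t : ℕ, 0 < t ∧ 0 < (X ^ t) i j

attribute [local instance] Matrix.linftyOpNormedRing Matrix.linftyOpNormedAlgebra

lemma aux_map_pow {L : ℕ} (X : Matrix (Fin L) (Fin L) ℝ) (n : ℕ) :
    (X.map ((↑) : ℝ → ℂ)) ^ n = (X ^ n).map ((↑) : ℝ → ℂ) := by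
  have : (X.map ((↑) : ℝ → ℂ)) = (algebraMap ℝ ℂ).mapMatrix X := rfl
  rw [this, ← map_pow]
  rfl

lemma aux_pow_nonneg {L : ℕ} (X : Matrix (Fin L) (Fin L) ℝ)
    (hX : ∀ i j, 0 ≤ X i j) (n : ℕ) : ∀ i j, 0 ≤ (X ^ n) i j := by
  induction n with
  | zero => intro i j; simp [Matrix.one_apply]; positivity
  | succ m ihm =>
    intro i j
    rw [pow_succ, Matrix.mul_apply]
    exact Finset.sum_nonneg fun k _ => mul_nonneg (ihm i k) (hX k j)

lemma aux_row_sum_pow {L : ℕ} (X : Matrix (Fin L) (Fin L) ℝ)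
    (hX : ∀ i j, 0 ≤ X i j) (s : ℝ) (hs : 0 ≤ s)
    (hrow : ∀ i, s ≤ ∑ j, X i j) (n : ℕ) (i : Fin L) :
    s ^ n ≤ ∑ j, (X ^ n) i j := by
  induction n generalizing i with
  | zero => simp [Matrix.one_apply]
  | succ n ih =>
    have hXn := aux_pow_nonneg X hX n
    calc s ^ (n + 1) = s * s ^ n := by ring
    _ ≤ (∑ k, X i k) * s ^ n := by
        exact mul_le_mul_of_nonneg_right (hrow i) (by positivity)
    _ = ∑ k, X i k * s ^ n := by rw [Finset.sum_mul]
    _ ≤ ∑ k, X i k * (∑ j, (X ^ n) k j) :=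
        Finset.sum_le_sum fun k _ => mul_le_mul_of_nonneg_left (ih k) (hX i k)
    _ = ∑ j, (X ^ (n + 1)) i j := by
        rw [pow_succ']
        simp only [Matrix.mul_apply, Finset.mul_sum]
        rw [Finset.sum_comm]

/-- Perron–Frobenius row-sum bounds: the spectral radius of a nonnegative
irreducible matrix lies between the minimum and maximum row sums. -/
theorem stmt13 {L : ℕ} [NeZero L] (X : Matrix (Fin L) (Fin L) ℝ)
    (hX : ∀ i j, 0 ≤ X i j) (hirr : MatIrreducible X) (r : ℝ)
    (hr₁ : ∃ μ ∈ spectrum ℂ (X.map ((↑) : ℝ → ℂ)), ‖μ‖ = r)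
    (hr₂ : ∀ μ ∈ spectrum ℂ (X.map ((↑) : ℝ → ℂ)), ‖μ‖ ≤ r) :
    (Finset.univ.inf' Finset.univ_nonempty fun i => ∑ j, X i j) ≤ r ∧
      r ≤ Finset.univ.sup' Finset.univ_nonempty fun i => ∑ j, X i j := by
  haveI : CompleteSpace (Matrix (Fin L) (Fin L) ℂ) := FiniteDimensional.complete ℂ _
  set A := X.map ((↑) : ℝ → ℂ) with hA
  obtain ⟨μ₀, hμ₀, hμ₀r⟩ := hr₁
  have hr0 : 0 ≤ r := hμ₀r ▸ norm_nonneg μ₀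
  -- norms of entries of A^n
  have hnn : ∀ (n : ℕ) (i j : Fin L), ‖(A ^ n) i j‖ = (X ^ n) i j := by
    intro n i j
    have hXn := aux_pow_nonneg X hX n
    rw [hA, aux_map_pow, Matrix.map_apply, Complex.norm_real] ; rw [Real.norm_of_nonneg (hXn i j)]
  -- norm of A^n equals max row sum of X^n
  have hnorm : ∀ n : ℕ, ‖A ^ n‖ =
      ((Finset.univ : Finset (Fin L)).sup fun i => ∑ j, ‖(A ^ n) i j‖₊ : NNReal) :=
    fun n => Matrix.linfty_opNorm_def _
  constructor
  · -- lower bound via Gelfand's formula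
    set s : ℝ := Finset.univ.inf' Finset.univ_nonempty fun i => ∑ j, X i j with hsdef
    have hs0 : 0 ≤ s := by
      obtain ⟨i, _, hi⟩ := Finset.exists_mem_eq_inf' (Finset.univ_nonempty) fun i => ∑ j, X i j
      rw [hsdef, hi]
      exact Finset.sum_nonneg fun j _ => hX i j
    have hrow : ∀ i, s ≤ ∑ j, X i j := fun i =>
      Finset.inf'_le _ (Finset.mem_univ i)
    -- spectralRadius A ≤ ofReal r
    have hsr_le : spectralRadius ℂ A ≤ ENNReal.ofReal r := by
      rw [spectralRadius]
      refine iSup₂_le fun μ hμ => ?_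
      rw [← enorm_eq_nnnorm, ← ofReal_norm]
      exact ENNReal.ofReal_le_ofReal (hr₂ μ hμ)
    -- ofReal s ≤ spectralRadius A
    have key : ENNReal.ofReal s ≤ spectralRadius ℂ A := by
      refine ge_of_tendsto (spectrum.pow_nnnorm_pow_one_div_tendsto_nhds_spectralRadius A) ?_
      filter_upwards [Filter.eventually_ge_atTop 1] with n hn
      have h1 : s ^ n ≤ ‖A ^ n‖ := by
        obtain ⟨i⟩ : Nonempty (Fin L) := inferInstance
        calc s ^ n ≤ ∑ j, (X ^ n) i j := aux_row_sum_pow X hX s hs0 hrow n i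
        _ = ∑ j, ‖(A ^ n) i j‖ := by simp_rw [hnn]
        _ = ((∑ j, ‖(A ^ n) i j‖₊ : NNReal) : ℝ) := by push_cast; rfl
        _ ≤ _ := by
            rw [hnorm n]
            exact NNReal.coe_le_coe.mpr (Finset.le_sup (f := fun i => ∑ j, ‖(A ^ n) i j‖₊) (Finset.mem_univ i))
      have h2 : ENNReal.ofReal (s ^ n) ≤ (‖A ^ n‖₊ : ENNReal) := by
        rw [← enorm_eq_nnnorm, ← ofReal_norm]
        exact ENNReal.ofReal_le_ofReal h1
      calc ENNReal.ofReal s = (ENNReal.ofReal (s ^ n)) ^ (1 / n : ℝ) := by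
            rw [ENNReal.ofReal_pow hs0, ← ENNReal.rpow_natCast, ← ENNReal.rpow_mul]
            rw [mul_one_div, div_self (by exact_mod_cast (by omega : n ≠ 0) : (n : ℝ) ≠ 0), ENNReal.rpow_one]
      _ ≤ (‖A ^ n‖₊ : ENNReal) ^ (1 / n : ℝ) :=
            ENNReal.rpow_le_rpow h2 (by positivity)
    have := key.trans hsr_le
    rwa [ENNReal.ofReal_le_ofReal_iff hr0] at this
  · -- upper bound via norm
    have h1 : r ≤ ‖A‖ := by
      rw [← hμ₀r]
      exact spectrum.norm_le_norm_of_mem hμ₀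
    refine h1.trans ?_
    have h2 := hnorm 1
    rw [pow_one] at h2
    rw [h2]
    obtain ⟨i, _, hi⟩ := Finset.exists_mem_eq_sup (Finset.univ : Finset (Fin L))
      Finset.univ_nonempty (fun i => ∑ j, ‖A i j‖₊)
    rw [hi]
    have h := hnn 1
    simp only [pow_one] at h
    have heq : ((∑ j, ‖A i j‖₊ : NNReal) : ℝ) = ∑ j, X i j := by
      rw [NNReal.coe_sum]
      exact Finset.sum_congr rfl fun j _ => by rw [coe_nnnorm, h]
    rw [heq]
    exact Finset.le_sup' (fun i => ∑ j, X i j) (Finset.mem_univ i)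
end
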